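/- Let S be a cut of CC_k and let 0 ≤ i < k. If rows i and i+1 are both monochromatic, or both bichromatic, with respect to S, then cs(swap(S,i)) = cs(S). -/

import Mathlib

/-- The cut size of a cut `S` of a finite simple graph `G`: the number of edges of `G` with
exactly one endpoint in `S` (counted as ordered pairs whose first component is in `S`). -/
def cutSize {V : Type*} [Fintype V] [DecidableEq V] (G : SimpleGraph V) [DecidableRel G.Adj]
    (S : Finset V) : ℕ :=
  ((Finset.univ : Finset (V × V)).filter fun p => G.Adj p.1 p.2 ∧ p.1 ∈ S ∧ p.2 ∉ S).card

def ccRel (k : ℕ) : (Fin (k+1) ⊕ Fin (k+1)) → (Fin (k+1) ⊕ Fin (k+1)) → Prop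
  | Sum.inl _, Sum.inl _ => True
  | Sum.inr _, Sum.inr _ => True
  | Sum.inl i, Sum.inr j => (j : ℕ) < (i : ℕ)
  | Sum.inr _, Sum.inl _ => False

instance (k : ℕ) : DecidableRel (ccRel k) := fun u v =>
  match u, v with
  | Sum.inl _, Sum.inl _ => inferInstanceAs (Decidable True)
  | Sum.inr _, Sum.inr _ => inferInstanceAs (Decidable True)
  | Sum.inl i, Sum.inr j => inferInstanceAs (Decidable ((j : ℕ) < (i : ℕ)))
  | Sum.inr _, Sum.inl _ => inferInstanceAs (Decidable False)

/-- The graph `CC_k`: vertices `v_0,…,v_k` (encoded `Sum.inl i`) and `v'_0,…,v'_k`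
(encoded `Sum.inr j`); each side is a clique and `v_i ~ v'_j` iff `j < i`. -/
def CCk (k : ℕ) : SimpleGraph (Fin (k+1) ⊕ Fin (k+1)) := SimpleGraph.fromRel (ccRel k)

instance (k : ℕ) : DecidableRel (CCk k).Adj := fun u v =>
  inferInstanceAs (Decidable (u ≠ v ∧ (ccRel k u v ∨ ccRel k v u)))

/-- Row `i` of a cut `S` of `CC_k` is monochromatic: `v_i` and `v'_i` are both in `S` or
both not in `S` (otherwise the row is bichromatic). -/
def rowMono (k : ℕ) (S : Finset (Fin (k+1) ⊕ Fin (k+1))) (i : Fin (k+1)) : Prop :=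
  (Sum.inl i ∈ S ↔ Sum.inr i ∈ S)

/-- `swap(S,i)`: the cut obtained from `S` by exchanging the memberships of `v_i` and
`v_{i+1}` and exchanging the memberships of `v'_i` and `v'_{i+1}`. -/
def swapCut (k : ℕ) (S : Finset (Fin (k+1) ⊕ Fin (k+1))) (i : Fin k) :
    Finset (Fin (k+1) ⊕ Fin (k+1)) :=
  S.image ((Equiv.swap (Sum.inl i.castSucc : Fin (k+1) ⊕ Fin (k+1)) (Sum.inl i.succ)).trans
    (Equiv.swap (Sum.inr i.castSucc : Fin (k+1) ⊕ Fin (k+1)) (Sum.inr i.succ)))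

lemma cutSize_image {V : Type*} [Fintype V] [DecidableEq V] (G : SimpleGraph V)
    [DecidableRel G.Adj] (σ : Equiv.Perm V) (S : Finset V) :
    cutSize G (S.image σ) =
      (Finset.univ.filter fun q : V × V => G.Adj (σ q.1) (σ q.2) ∧ q.1 ∈ S ∧ q.2 ∉ S).card := by
  have himg : ∀ x : V, x ∈ S.image σ ↔ σ.symm x ∈ S := by
    intro x
    constructor
    · rintro hx
      rcases Finset.mem_image.mp hx with ⟨a, ha, rfl⟩
      simpa using ha
    · intro hx
      exact Finset.mem_image.mpr ⟨σ.symm x, hx, by simp⟩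
  unfold cutSize
  apply Finset.card_bij' (fun p _ => (σ.symm p.1, σ.symm p.2)) (fun q _ => (σ q.1, σ q.2))
  · intro p hp
    simp only [Finset.mem_filter, Finset.mem_univ, true_and] at hp ⊢
    simpa [himg] using hp
  · intro q hq
    simp only [Finset.mem_filter, Finset.mem_univ, true_and] at hq ⊢
    simpa [himg] using hq
  · intro p hp; simp
  · intro q hq; simp

lemma card_filter_eq_of_eq_outside {α : Type*} [Fintype α] [DecidableEq α]
    (T : Finset α) (P Q : α → Prop) [DecidablePred P] [DecidablePred Q]
    (hout : ∀ p, p ∉ T → (P p ↔ Q p))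
    (hT : (T.filter P).card = (T.filter Q).card) :
    (Finset.univ.filter P).card = (Finset.univ.filter Q).card := by
  have h1 : ∀ (R : α → Prop) (_ : DecidablePred R),
      (Finset.univ.filter R).card
        = (T.filter R).card + ((Finset.univ.filter R).filter (· ∉ T)).card := by
    intro R _
    rw [← Finset.card_filter_add_card_filter_not (p := (· ∈ T))
      (s := Finset.univ.filter R)]
    have : (Finset.univ.filter R).filter (· ∈ T) = T.filter R := by
      ext x; simp [Finset.mem_filter, and_comm]
    rw [this]
  rw [h1 P inferInstance, h1 Q inferInstance, hT]
  have : (Finset.univ.filter P).filter (· ∉ T) = (Finset.univ.filter Q).filter (· ∉ T) := by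
    ext x
    simp only [Finset.mem_filter, Finset.mem_univ, true_and]
    constructor
    · rintro ⟨hp, hn⟩; exact ⟨(hout x hn).mp hp, hn⟩
    · rintro ⟨hq, hn⟩; exact ⟨(hout x hn).mpr hq, hn⟩
  rw [this]

lemma adj_ll {k : ℕ} (a b : Fin (k+1)) : (CCk k).Adj (.inl a) (.inl b) ↔ a ≠ b := by
  simp [CCk, SimpleGraph.fromRel_adj, ccRel]

lemma adj_rr {k : ℕ} (a b : Fin (k+1)) : (CCk k).Adj (.inr a) (.inr b) ↔ a ≠ b := by
  simp [CCk, SimpleGraph.fromRel_adj, ccRel]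

lemma adj_lr {k : ℕ} (a b : Fin (k+1)) :
    (CCk k).Adj (.inl a) (.inr b) ↔ (b : ℕ) < (a : ℕ) := by
  simp [CCk, SimpleGraph.fromRel_adj, ccRel]

lemma adj_rl {k : ℕ} (a b : Fin (k+1)) :
    (CCk k).Adj (.inr a) (.inl b) ↔ (a : ℕ) < (b : ℕ) := by
  simp [CCk, SimpleGraph.fromRel_adj, ccRel]

lemma sigma_eq {k : ℕ} (c s : Fin (k+1)) :
    ((Equiv.swap (Sum.inl c : Fin (k+1) ⊕ Fin (k+1)) (Sum.inl s)).trans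
      (Equiv.swap (Sum.inr c : Fin (k+1) ⊕ Fin (k+1)) (Sum.inr s)))
      = Equiv.sumCongr (Equiv.swap c s) (Equiv.swap c s) := by
  ext x
  cases x with
  | inl a =>
    by_cases h1 : a = c <;> by_cases h2 : a = s <;>
      simp_all [Equiv.swap_apply_def]
  | inr a =>
    by_cases h1 : a = c <;> by_cases h2 : a = s <;>
      simp_all [Equiv.swap_apply_def]

lemma swap_lt {k : ℕ} (i : Fin k) (a b : Fin (k+1))
    (h1 : ¬(a = i.succ ∧ b = i.castSucc)) (h2 : ¬(a = i.castSucc ∧ b = i.succ)) :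
    ((Equiv.swap i.castSucc i.succ b : Fin (k+1)) : ℕ)
        < ((Equiv.swap i.castSucc i.succ a : Fin (k+1)) : ℕ)
      ↔ (b : ℕ) < (a : ℕ) := by
  simp only [Equiv.swap_apply_def]
  split_ifs <;> simp_all [Fin.ext_iff] <;> omega

/-- If rows `i` and `i+1` are both monochromatic or both bichromatic with respect to a cut
`S` of `CC_k`, then `cs(swap(S,i)) = cs(S)`. -/
theorem cutSize_swapCut_of_same_kind (k : ℕ) (S : Finset (Fin (k+1) ⊕ Fin (k+1))) (i : Fin k)
    (h : rowMono k S i.castSucc ↔ rowMono k S i.succ) :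
    cutSize (CCk k) (swapCut k S i) = cutSize (CCk k) S := by
  classical
  unfold swapCut
  rw [cutSize_image, sigma_eq]
  unfold cutSize
  unfold rowMono at h
  apply card_filter_eq_of_eq_outside
    ({(.inl i.succ, .inr i.castSucc), (.inr i.castSucc, .inl i.succ),
      (.inl i.castSucc, .inr i.succ), (.inr i.succ, .inl i.castSucc)} :
      Finset ((Fin (k+1) ⊕ Fin (k+1)) × (Fin (k+1) ⊕ Fin (k+1))))
  · rintro ⟨x, y⟩ hp
    cases x with
    | inl a =>
      cases y with
      | inl b => simp [adj_ll]
      | inr b =>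
        have h1 : ¬(a = i.succ ∧ b = i.castSucc) := by
          rintro ⟨rfl, rfl⟩; exact hp (by simp)
        have h2 : ¬(a = i.castSucc ∧ b = i.succ) := by
          rintro ⟨rfl, rfl⟩; exact hp (by simp)
        have key := swap_lt i a b h1 h2
        simp only [Equiv.sumCongr_apply, Sum.map_inl, Sum.map_inr, adj_lr]
        rw [key]
    | inr a =>
      cases y with
      | inl b =>
        have h1 : ¬(b = i.succ ∧ a = i.castSucc) := by
          rintro ⟨rfl, rfl⟩; exact hp (by simp)
        have h2 : ¬(b = i.castSucc ∧ a = i.succ) := by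
          rintro ⟨rfl, rfl⟩; exact hp (by simp)
        have key := swap_lt i b a h1 h2
        simp only [Equiv.sumCongr_apply, Sum.map_inl, Sum.map_inr, adj_rl]
        rw [key]
      | inr b => simp [adj_rr]
  · have hcs : (i.castSucc : Fin (k+1)) ≠ i.succ := (Fin.castSucc_lt_succ (i := i)).ne
    have hx : ¬((i : ℕ) + 1 < (i : ℕ)) := by omega
    have hy : (i : ℕ) < (i : ℕ) + 1 := by omega
    by_cases hA : (Sum.inl i.castSucc : Fin (k+1) ⊕ Fin (k+1)) ∈ S <;>
      by_cases hB : (Sum.inr i.castSucc : Fin (k+1) ⊕ Fin (k+1)) ∈ S <;>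
      by_cases hC : (Sum.inl i.succ : Fin (k+1) ⊕ Fin (k+1)) ∈ S <;>
      by_cases hD : (Sum.inr i.succ : Fin (k+1) ⊕ Fin (k+1)) ∈ S <;>
      simp_all [Finset.filter_insert, Finset.filter_singleton,
        adj_lr, adj_rl, Equiv.swap_apply_left, Equiv.swap_apply_right, hcs, hcs.symm]
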